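/- arXiv:2310.07569 — 2 statements merged into one kernel-verified Lean document; each statement's English description precedes it below -/
import Mathlib

section
/- Under the partially coherent measurement model y_p = e^{iφ_p} Σ_{k∈Λ} x_k A_p(:,k) + w_p with unit-norm real columns A_p(:,j), noise bound |A_p(:,i)^T w_p| < ζ for all i,p, coherence μ_p, sparsity K = |Λ| ≥ 1, and |x_max| = max_{k∈Λ}|x_k|, it holds that max_{i∈Λ} Σ_{p=1}^P |A_p(:,i)^T y_p| ≥ P|x_max| − Pζ − (K−1)(Σ_{p=1}^P μ_p)|x_max|. -/
open Complex Finset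

/-- On-support correlation lower bound (eq. (15)): in the partially coherent
model with sparsity `K = |Λ| ≥ 1`,
`max_{i∈Λ} Σ_p |A_p(:,i)^T y_p| ≥ P|x_max| − Pζ − (K−1)(Σ_p μ_p)|x_max|`. -/
theorem on_support_correlation_bound
    {M N P K : ℕ} (A : Fin P → Matrix (Fin M) (Fin N) ℝ)
    (Λ : Finset (Fin N)) (hΛ : Λ.Nonempty) (hK : Λ.card = K) (hK1 : 1 ≤ K)
    (x : Fin N → ℂ) (φ : Fin P → ℝ)
    (w : Fin P → Fin M → ℂ) (y : Fin P → Fin M → ℂ)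
    (μ : Fin P → ℝ) (ζ : ℝ)
    (hcols : ∀ p j, ∑ m, (A p m j) ^ 2 = 1)
    (hμ : ∀ p, ∀ i j, i ≠ j → |∑ m, A p m i * A p m j| ≤ μ p)
    (hy : ∀ p m, y p m =
      Complex.exp (φ p * Complex.I) * (∑ k ∈ Λ, x k * (A p m k : ℂ)) + w p m)
    (hw : ∀ p, ∀ i : Fin N, ‖∑ m, (A p m i : ℂ) * w p m‖ < ζ) :
    Λ.sup' hΛ (fun i => ∑ p, ‖∑ m, (A p m i : ℂ) * y p m‖) ≥
      (P : ℝ) * (Λ.sup' hΛ fun k => ‖x k‖) - (P : ℝ) * ζ -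
        ((K : ℝ) - 1) * (∑ p, μ p) * (Λ.sup' hΛ fun k => ‖x k‖) := by
  set xmax := Λ.sup' hΛ fun k => ‖x k‖ with hxmax
  obtain ⟨i, hiΛ, hi⟩ := Finset.exists_mem_eq_sup' hΛ (fun k => ‖x k‖)
  have hxk : ∀ k ∈ Λ, ‖x k‖ ≤ xmax := by
    intro k hk; rw [hxmax]; exact Finset.le_sup' (fun k => ‖x k‖) hk
  have hxmax0 : 0 ≤ xmax := (norm_nonneg (x i)).trans (hxk i hiΛ)
  have hcard : ((Λ.erase i).card : ℝ) = (K : ℝ) - 1 := by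
    rw [Finset.card_erase_of_mem hiΛ, hK]
    have : 1 ≤ K := hK1
    push_cast [Nat.cast_sub this]
    ring
  have key : ∀ p : Fin P,
      xmax - ((K:ℝ)-1) * μ p * xmax - ζ ≤
        ‖∑ m, (A p m i : ℂ) * y p m‖ := by
    intro p
    have hc : (∑ m, (A p m i : ℂ) * y p m) =
        Complex.exp (φ p * Complex.I) *
          (x i + ∑ k ∈ Λ.erase i, x k * ((∑ m, A p m i * A p m k : ℝ) : ℂ))
          + ∑ m, (A p m i : ℂ) * w p m := by
      have h1 : (∑ m, (A p m i : ℂ) * y p m) =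
          Complex.exp (φ p * Complex.I) *
            (∑ k ∈ Λ, x k * ((∑ m, A p m i * A p m k : ℝ) : ℂ))
            + ∑ m, (A p m i : ℂ) * w p m := by
        simp only [hy, mul_add, Finset.sum_add_distrib]
        congr 1
        calc ∑ m, (A p m i : ℂ) *
              (Complex.exp (φ p * Complex.I) * ∑ k ∈ Λ, x k * (A p m k : ℂ))
            = ∑ m, ∑ k ∈ Λ, Complex.exp (φ p * Complex.I) *
                (x k * ((A p m i : ℂ) * (A p m k : ℂ))) := by
              refine Finset.sum_congr rfl fun m _ => ?_
              rw [Finset.mul_sum, Finset.mul_sum]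
              exact Finset.sum_congr rfl fun k _ => by ring
          _ = ∑ k ∈ Λ, ∑ m, Complex.exp (φ p * Complex.I) *
                (x k * ((A p m i : ℂ) * (A p m k : ℂ))) := Finset.sum_comm
          _ = Complex.exp (φ p * Complex.I) *
                ∑ k ∈ Λ, x k * ((∑ m, A p m i * A p m k : ℝ) : ℂ) := by
              rw [Finset.mul_sum]
              refine Finset.sum_congr rfl fun k _ => ?_
              push_cast
              rw [Finset.mul_sum, Finset.mul_sum]
      rw [h1]
      congr 2
      rw [← Finset.add_sum_erase _ _ hiΛ]
      congr 1
      have : (∑ m, A p m i * A p m i) = 1 := by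
        have := hcols p i
        simpa [pow_two] using this
      rw [this]
      simp
    rw [hc]
    have habs_e : ‖Complex.exp (φ p * Complex.I)‖ = 1 :=
      Complex.norm_exp_ofReal_mul_I _
    set S := ∑ k ∈ Λ.erase i, x k * ((∑ m, A p m i * A p m k : ℝ) : ℂ) with hS
    set n := ∑ m, (A p m i : ℂ) * w p m with hn
    have hSbound : ‖S‖ ≤ ((K:ℝ)-1) * μ p * xmax := by
      calc ‖S‖ ≤ ∑ k ∈ Λ.erase i,
            ‖x k * ((∑ m, A p m i * A p m k : ℝ) : ℂ)‖ :=
            norm_sum_le _ _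
        _ ≤ ∑ k ∈ Λ.erase i, xmax * μ p := by
            apply Finset.sum_le_sum
            intro k hk
            rw [norm_mul, Complex.norm_real, Real.norm_eq_abs]
            have hne : i ≠ k := (Finset.ne_of_mem_erase hk).symm
            exact mul_le_mul (hxk k (Finset.mem_of_mem_erase hk))
              (hμ p i k hne) (abs_nonneg _) hxmax0
        _ = ((K:ℝ)-1) * μ p * xmax := by
            rw [Finset.sum_const, nsmul_eq_mul, hcard]; ring
    have hnb : ‖n‖ < ζ := hw p i
    have tri1 : ‖x i‖ - ‖S‖ ≤
        ‖x i + S‖ := by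
      have h := norm_add_le (x i + S) (-S)
      simp only [add_neg_cancel_right, norm_neg] at h
      linarith
    have tri2 : ‖Complex.exp (φ p * Complex.I) * (x i + S)‖ -
        ‖n‖ ≤
        ‖Complex.exp (φ p * Complex.I) * (x i + S) + n‖ := by
      have h := norm_add_le
        (Complex.exp (φ p * Complex.I) * (x i + S) + n) (-n)
      simp only [add_neg_cancel_right, norm_neg] at h
      linarith
    rw [norm_mul, habs_e, one_mul] at tri2
    have : xmax = ‖x i‖ := hi
    linarith
  calc (P : ℝ) * xmax - (P:ℝ) * ζ - ((K:ℝ)-1) * (∑ p, μ p) * xmax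
      = ∑ p : Fin P, (xmax - ((K:ℝ)-1) * μ p * xmax - ζ) := by
        have hsum : ∑ p : Fin P, (xmax - ((K:ℝ)-1) * μ p * xmax - ζ) =
            (P:ℝ) * xmax - ((K:ℝ)-1) * (∑ p, μ p) * xmax - (P:ℝ) * ζ := by
          rw [Finset.sum_sub_distrib, Finset.sum_sub_distrib, Finset.sum_const,
            Finset.sum_const, Finset.card_univ, Fintype.card_fin,
            nsmul_eq_mul, nsmul_eq_mul]
          congr 1
          congr 1
          rw [Finset.mul_sum, Finset.sum_mul]
        rw [hsum]; ring
    _ ≤ ∑ p, ‖∑ m, (A p m i : ℂ) * y p m‖ :=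
        Finset.sum_le_sum fun p _ => key p
    _ ≤ _ := Finset.le_sup'
        (fun j => ∑ p, ‖∑ m, (A p m j : ℂ) * y p m‖) hiΛ
end

section
/- Let Λ ⊆ {1,…,N} with |Λ| = K ≥ 1, and consider measurements y_p = e^{iφ_p} Σ_{k∈Λ} x_k A_p(:,k) + w_p, p = 1,…,P, where A_p ∈ ℝ^{M×N} has unit-norm columns with coherence μ_p, and |A_p(:,i)^T w_p| < ζ for all i, p. If P|x_max| − 2Pζ − (2K−1)(Σ_{p=1}^P μ_p)|x_max| > 0, where |x_max| = max_{k∈Λ}|x_k|, then max_{i∈Λ} Σ_{p=1}^P |A_p(:,i)^T y_p| > max_{i∉Λ} Σ_{p=1}^P |A_p(:,i)^T y_p|; hence the first support element selected by the PC-MP correlation rule lies in the true support Λ. -/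
open Complex Finset

/-- Deterministic core of Proposition 1: if
`P|x_max| − 2Pζ − (2K−1)(Σ_p μ_p)|x_max| > 0`, then the on-support correlation
maximum strictly exceeds every off-support correlation, so the first support
element selected by the PC-MP rule lies in the true support `Λ`. -/
theorem pcmp_first_iteration_support_detection
    {M N P K : ℕ} (A : Fin P → Matrix (Fin M) (Fin N) ℝ)
    (Λ : Finset (Fin N)) (hΛ : Λ.Nonempty) (hK : Λ.card = K) (hK1 : 1 ≤ K)
    (x : Fin N → ℂ) (φ : Fin P → ℝ)
    (w : Fin P → Fin M → ℂ) (y : Fin P → Fin M → ℂ)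
    (μ : Fin P → ℝ) (ζ : ℝ)
    (hcols : ∀ p j, ∑ m, (A p m j) ^ 2 = 1)
    (hμ : ∀ p, ∀ i j, i ≠ j → |∑ m, A p m i * A p m j| ≤ μ p)
    (hy : ∀ p m, y p m =
      Complex.exp (φ p * Complex.I) * (∑ k ∈ Λ, x k * (A p m k : ℂ)) + w p m)
    (hw : ∀ p, ∀ i : Fin N, ‖∑ m, (A p m i : ℂ) * w p m‖ < ζ)
    (hcond : (P : ℝ) * (Λ.sup' hΛ fun k => ‖x k‖) -
        2 * (P : ℝ) * ζ -
        (2 * (K : ℝ) - 1) * (∑ p, μ p) *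
          (Λ.sup' hΛ fun k => ‖x k‖) > 0) :
    ∀ i : Fin N, i ∉ Λ →
      Λ.sup' hΛ (fun j => ∑ p, ‖∑ m, (A p m j : ℂ) * y p m‖) >
        ∑ p, ‖∑ m, (A p m i : ℂ) * y p m‖ := by
  intro i hi
  set X := Λ.sup' hΛ fun k => ‖x k‖ with hX
  obtain ⟨k0, hk0, hk0max⟩ := Λ.exists_mem_eq_sup' hΛ fun k => ‖x k‖
  have hXk : ∀ k ∈ Λ, ‖x k‖ ≤ X := fun k hk => Finset.le_sup' (fun k => ‖x k‖) hk
  have hXnn : 0 ≤ X := by rw [hX, hk0max]; exact norm_nonneg _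
  have hik0 : i ≠ k0 := by rintro rfl; exact hi hk0
  have hμ0 : ∀ p, 0 ≤ μ p := fun p => le_trans (abs_nonneg _) (hμ p i k0 hik0)
  have tri : ∀ a b : ℂ, ‖a‖ - ‖b‖ ≤ ‖a + b‖ := by
    intro a b
    have h := norm_add_le (a + b) (-b)
    simp only [add_neg_cancel_right, norm_neg] at h
    linarith [h]
  have key : ∀ p (j : Fin N), (∑ m, (A p m j : ℂ) * y p m) =
      Complex.exp (φ p * Complex.I) *
        (∑ k ∈ Λ, x k * ((∑ m, A p m j * A p m k : ℝ) : ℂ)) +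
      ∑ m, (A p m j : ℂ) * w p m := by
    intro p j
    simp only [hy, mul_add, Finset.sum_add_distrib]
    congr 1
    simp only [Finset.mul_sum]
    rw [Finset.sum_comm]
    refine Finset.sum_congr rfl fun k _ => ?_
    push_cast
    rw [Finset.mul_sum, Finset.mul_sum]
    refine Finset.sum_congr rfl fun m _ => ?_
    ring
  have habs_exp : ∀ p, ‖Complex.exp (φ p * Complex.I)‖ = 1 := by
    intro p
    simp
  -- upper bound off support
  have upper : ∀ p, ‖∑ m, (A p m i : ℂ) * y p m‖ ≤ (K : ℝ) * μ p * X + ζ := by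
    intro p
    rw [key p i]
    refine le_trans (norm_add_le _ _) ?_
    have h1 : ‖Complex.exp (φ p * Complex.I) *
        ∑ k ∈ Λ, x k * ((∑ m, A p m i * A p m k : ℝ) : ℂ)‖ ≤ (K : ℝ) * μ p * X := by
      rw [norm_mul, habs_exp, one_mul]
      refine le_trans (norm_sum_le _ _) ?_
      have : ∀ k ∈ Λ, ‖x k * ((∑ m, A p m i * A p m k : ℝ) : ℂ)‖ ≤ μ p * X := by
        intro k hk
        rw [norm_mul, Complex.norm_real, Real.norm_eq_abs]
        have h2 : |∑ m, A p m i * A p m k| ≤ μ p :=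
          hμ p i k (by rintro rfl; exact hi hk)
        calc ‖x k‖ * |∑ m, A p m i * A p m k| ≤ X * μ p := by
              exact mul_le_mul (hXk k hk) h2 (abs_nonneg _) hXnn
          _ = μ p * X := mul_comm _ _
      refine le_trans (Finset.sum_le_sum this) ?_
      rw [Finset.sum_const, hK, nsmul_eq_mul]
      ring_nf
      exact le_of_eq (by ring)
    linarith [h1, (hw p i).le]
  -- lower bound on support at k0
  have hG : ∀ p, (∑ m, A p m k0 * A p m k0) = 1 := by
    intro p
    have := hcols p k0
    simpa [sq] using this
  have lower : ∀ p, X - ((K : ℝ) - 1) * μ p * X - ζ ≤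
      ‖∑ m, (A p m k0 : ℂ) * y p m‖ := by
    intro p
    rw [key p k0]
    refine le_trans ?_ (tri _ _)
    have h1 : ‖Complex.exp (φ p * Complex.I) *
        ∑ k ∈ Λ, x k * ((∑ m, A p m k0 * A p m k : ℝ) : ℂ)‖ =
        ‖∑ k ∈ Λ, x k * ((∑ m, A p m k0 * A p m k : ℝ) : ℂ)‖ := by
      rw [norm_mul, habs_exp, one_mul]
    rw [h1]
    have hsplit : (∑ k ∈ Λ, x k * ((∑ m, A p m k0 * A p m k : ℝ) : ℂ)) =
        x k0 * ((∑ m, A p m k0 * A p m k0 : ℝ) : ℂ) +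
        ∑ k ∈ Λ.erase k0, x k * ((∑ m, A p m k0 * A p m k : ℝ) : ℂ) :=
      (Finset.add_sum_erase Λ _ hk0).symm
    rw [hsplit]
    have h2 : ‖x k0 * ((∑ m, A p m k0 * A p m k0 : ℝ) : ℂ)‖ = X := by
      rw [norm_mul, hG p]
      simp [← hk0max, hX]
    have h3 : ‖∑ k ∈ Λ.erase k0, x k * ((∑ m, A p m k0 * A p m k : ℝ) : ℂ)‖ ≤
        ((K : ℝ) - 1) * μ p * X := by
      refine le_trans (norm_sum_le _ _) ?_
      have hb : ∀ k ∈ Λ.erase k0, ‖x k * ((∑ m, A p m k0 * A p m k : ℝ) : ℂ)‖ ≤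
          μ p * X := by
        intro k hk
        rw [norm_mul, Complex.norm_real, Real.norm_eq_abs]
        have hne : k0 ≠ k := fun h => (Finset.ne_of_mem_erase hk) h.symm
        calc ‖x k‖ * |∑ m, A p m k0 * A p m k| ≤ X * μ p :=
              mul_le_mul (hXk k (Finset.mem_of_mem_erase hk)) (hμ p k0 k hne)
                (abs_nonneg _) hXnn
          _ = μ p * X := mul_comm _ _
      refine le_trans (Finset.sum_le_sum hb) ?_
      rw [Finset.sum_const, Finset.card_erase_of_mem hk0, hK, nsmul_eq_mul]
      have : ((K - 1 : ℕ) : ℝ) = (K : ℝ) - 1 := by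
        push_cast [Nat.cast_sub hK1]; ring
      rw [this]
      exact le_of_eq (by ring)
    have hwle : ‖∑ m, (A p m k0 : ℂ) * w p m‖ ≤ ζ := (hw p k0).le
    have h4 : X - ((K : ℝ) - 1) * μ p * X ≤
        ‖x k0 * ((∑ m, A p m k0 * A p m k0 : ℝ) : ℂ) +
          ∑ k ∈ Λ.erase k0, x k * ((∑ m, A p m k0 * A p m k : ℝ) : ℂ)‖ := by
      refine le_trans ?_ (tri _ _)
      rw [h2]
      linarith [h3]
    linarith [h4, hwle]
  -- sum the bounds
  have hsum_off : ∑ p, ‖∑ m, (A p m i : ℂ) * y p m‖ ≤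
      (K : ℝ) * (∑ p, μ p) * X + (P : ℝ) * ζ := by
    refine le_trans (Finset.sum_le_sum fun p _ => upper p) ?_
    rw [Finset.sum_add_distrib, Finset.sum_const, Finset.card_univ, Fintype.card_fin,
      nsmul_eq_mul]
    have : ∑ p : Fin P, (K : ℝ) * μ p * X = (K : ℝ) * (∑ p, μ p) * X := by
      rw [← Finset.sum_mul, ← Finset.mul_sum]
    rw [this]
  have hsum_on : (P : ℝ) * X - ((K : ℝ) - 1) * (∑ p, μ p) * X - (P : ℝ) * ζ ≤
      ∑ p, ‖∑ m, (A p m k0 : ℂ) * y p m‖ := by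
    refine le_trans ?_ (Finset.sum_le_sum fun p _ => lower p)
    rw [Finset.sum_sub_distrib, Finset.sum_sub_distrib, Finset.sum_const, Finset.sum_const,
      Finset.card_univ, Fintype.card_fin, nsmul_eq_mul, nsmul_eq_mul]
    have : ∑ p : Fin P, ((K : ℝ) - 1) * μ p * X = ((K : ℝ) - 1) * (∑ p, μ p) * X := by
      rw [← Finset.sum_mul, ← Finset.mul_sum]
    rw [this]
  have hfin : (K : ℝ) * (∑ p, μ p) * X + (P : ℝ) * ζ <
      (P : ℝ) * X - ((K : ℝ) - 1) * (∑ p, μ p) * X - (P : ℝ) * ζ := by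
    nlinarith [hcond]
  calc ∑ p, ‖∑ m, (A p m i : ℂ) * y p m‖
      ≤ (K : ℝ) * (∑ p, μ p) * X + (P : ℝ) * ζ := hsum_off
    _ < (P : ℝ) * X - ((K : ℝ) - 1) * (∑ p, μ p) * X - (P : ℝ) * ζ := hfin
    _ ≤ ∑ p, ‖∑ m, (A p m k0 : ℂ) * y p m‖ := hsum_on
    _ ≤ Λ.sup' hΛ (fun j => ∑ p, ‖∑ m, (A p m j : ℂ) * y p m‖) :=
        Finset.le_sup' (fun j => ∑ p, ‖∑ m, (A p m j : ℂ) * y p m‖) hk0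
end
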